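/- The slotted-protocol duty-cycle constraint implies the latency bound L ≥ ω·(1 + 2α + α²)/η² = ω·(1+α)²/η²: if η = k·(ω + α·ω)/L (slot length I = ω) and k ≥ √(L/ω) with k, L, ω, α, η > 0, then L ≥ ω·(1 + α)²/η². Moreover, for α = 1 this equals 4ω/η². -/
import Mathlib

/-- Slotted-protocol latency bound: with slot length `I = ω`, duty-cycle
`η = k·(ω + α·ω)/L` and the requirement `k ≥ √(L/ω)`, the latency satisfies
`L ≥ ω·(1 + α)²/η²`; for `α = 1` this is `4ω/η²`. -/
theorem slotted_latency_bound (k L ω α η : ℝ) (hk : 0 < k) (hL : 0 < L)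
    (hω : 0 < ω) (hα : 0 < α) (hη : 0 < η)
    (hduty : η = k * (ω + α * ω) / L)
    (hsqrt : Real.sqrt (L / ω) ≤ k) :
    ω * (1 + α) ^ 2 / η ^ 2 ≤ L ∧
    (α = 1 → ω * (1 + α) ^ 2 / η ^ 2 = 4 * ω / η ^ 2) := by
  constructor
  · have hk2 : L / ω ≤ k ^ 2 := by
      have := Real.sq_sqrt (by positivity : (0:ℝ) ≤ L / ω)
      nlinarith [Real.sqrt_nonneg (L / ω), mul_self_le_mul_self (Real.sqrt_nonneg (L / ω)) hsqrt]
    have hηval : η * L = k * (ω + α * ω) := by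
      field_simp at hduty
      linarith [hduty]
    rw [div_le_iff₀ (by positivity)]
    have hLω : L ≤ ω * k ^ 2 := by
      rw [div_le_iff₀ hω] at hk2; linarith [hk2]
    have h2 : (η * L) ^ 2 = k ^ 2 * (ω + α * ω) ^ 2 := by rw [hηval]; ring
    have h3 : L * (ω + α * ω) ^ 2 ≤ ω * k ^ 2 * (ω + α * ω) ^ 2 :=
      mul_le_mul_of_nonneg_right hLω (by positivity)
    nlinarith [mul_pos hω hL, sq_nonneg (ω + α * ω)]
  · intro h; subst h; ring
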